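/- Let Γ be the directed graph on the eleven vertices {1, 2, 3, A₁₂, A₂₃, A₃₁, B₂₁, B₃₂, B₁₃, A, B} with the following arcs: directed arcs 1→A₁₂, A₁₂→2, 2→A₂₃, A₂₃→3, 3→A₃₁, A₃₁→1, 1→B₁₃, B₁₃→3, 3→B₃₂, B₃₂→2, 2→B₂₁, B₂₁→1; and undirected edges (arcs in both directions) forming a triangle on {A₁₂, A₂₃, A₃₁}, a triangle on {B₂₁, B₃₂, B₁₃}, edges joining A to each of A₁₂, A₂₃, A₃₁, and edges joining B to each of B₂₁, B₃₂, B₁₃. Then every automorphism of Γ (a permutation σ of the vertices with u→w an arc if and only if σ(u)→σ(w) is an arc) maps the set {1,2,3} to itself, the restriction map from the automorphism group of Γ to the symmetric group on {1,2,3} is injective and surjective, and hence the automorphism group of Γ is isomorphic to S₃ acting naturally on {1,2,3}. -/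

import Mathlib

/-- The eleven vertices of the color gadget `Γ`. -/
inductive GadgetV : Type
  | v1 | v2 | v3 | A12 | A23 | A31 | B21 | B32 | B13 | A | B
  deriving DecidableEq

instance : Fintype GadgetV where
  elems := {GadgetV.v1, GadgetV.v2, GadgetV.v3, GadgetV.A12, GadgetV.A23, GadgetV.A31,
    GadgetV.B21, GadgetV.B32, GadgetV.B13, GadgetV.A, GadgetV.B}
  complete := by intro x; cases x <;> decide

open GadgetV

/-- The arcs of the color gadget `Γ`: the twelve directed arcs
`1→A₁₂→2→A₂₃→3→A₃₁→1` and `1→B₁₃→3→B₃₂→2→B₂₁→1`, together with undirected edges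
(arcs in both directions) forming a triangle on `{A₁₂, A₂₃, A₃₁}`, a triangle on
`{B₂₁, B₃₂, B₁₃}`, edges from `A` to each `Aᵢⱼ`, and edges from `B` to each `Bⱼᵢ`. -/
def gadgetArcs : List (GadgetV × GadgetV) :=
  [(v1, A12), (A12, v2), (v2, A23), (A23, v3), (v3, A31), (A31, v1),
   (v1, B13), (B13, v3), (v3, B32), (B32, v2), (v2, B21), (B21, v1),
   (A12, A23), (A23, A12), (A23, A31), (A31, A23), (A31, A12), (A12, A31),
   (B21, B32), (B32, B21), (B32, B13), (B13, B32), (B13, B21), (B21, B13),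
   (A, A12), (A12, A), (A, A23), (A23, A), (A, A31), (A31, A),
   (B, B21), (B21, B), (B, B32), (B32, B), (B, B13), (B13, B)]

/-- The arc relation of `Γ`. -/
def GadgetArc (u w : GadgetV) : Prop := (u, w) ∈ gadgetArcs

/-- A permutation of the vertices is an automorphism of `Γ` iff it preserves the arc
relation in both directions. -/
def IsGadgetAut (σ : Equiv.Perm GadgetV) : Prop :=
  ∀ u w, GadgetArc u w ↔ GadgetArc (σ u) (σ w)

/-- The automorphism group of `Γ`, as a subgroup of the permutations of its vertices. -/
def gadgetAutGroup : Subgroup (Equiv.Perm GadgetV) where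
  carrier := {σ | IsGadgetAut σ}
  mul_mem' := by
    intro σ τ hσ hτ u w
    exact (hτ u w).trans (hσ (τ u) (τ w))
  one_mem' := by intro u w; rfl
  inv_mem' := by
    intro σ hσ u w
    simpa using (hσ (σ⁻¹ u) (σ⁻¹ w)).symm

/-- The three distinguished vertices `1, 2, 3` of `Γ`. -/
def gadgetT : Fin 3 → GadgetV := ![v1, v2, v3]

instance (u w : GadgetV) : Decidable (GadgetArc u w) := by unfold GadgetArc; infer_instance

instance (σ : Equiv.Perm GadgetV) : Decidable (IsGadgetAut σ) := by
  unfold IsGadgetAut; infer_instance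

lemma aut_of_mem {σ : Equiv.Perm GadgetV} (h : σ ∈ gadgetAutGroup) : IsGadgetAut σ := h

lemma gadget_tri : ∀ x y z : GadgetV, (y ≠ z ∧ GadgetArc x y ∧ ¬GadgetArc y x ∧
    GadgetArc x z ∧ ¬GadgetArc z x) → x = v1 ∨ x = v2 ∨ x = v3 := by decide

lemma gadgetT_inj : Function.Injective gadgetT := by decide

/-- If an automorphism fixes `v1, v2, v3` then it is the identity. -/
lemma gadget_fix_id (σ : Equiv.Perm GadgetV) (hσ : IsGadgetAut σ)
    (h1 : σ v1 = v1) (h2 : σ v2 = v2) (h3 : σ v3 = v3) : σ = 1 := by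
  have step : ∀ a b x : GadgetV, σ a = a → σ b = b → GadgetArc a x → GadgetArc x b →
      GadgetArc a (σ x) ∧ GadgetArc (σ x) b := by
    intro a b x ha hb hax hxb
    constructor
    · have := (hσ a x).mp hax; rwa [ha] at this
    · have := (hσ x b).mp hxb; rwa [hb] at this
  have e12 : σ A12 = A12 := by
    obtain ⟨p, q⟩ := step v1 v2 A12 h1 h2 (by decide) (by decide)
    exact (by decide : ∀ x, GadgetArc v1 x ∧ GadgetArc x v2 → x = A12) _ ⟨p, q⟩
  have e23 : σ A23 = A23 := by
    obtain ⟨p, q⟩ := step v2 v3 A23 h2 h3 (by decide) (by decide)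
    exact (by decide : ∀ x, GadgetArc v2 x ∧ GadgetArc x v3 → x = A23) _ ⟨p, q⟩
  have e31 : σ A31 = A31 := by
    obtain ⟨p, q⟩ := step v3 v1 A31 h3 h1 (by decide) (by decide)
    exact (by decide : ∀ x, GadgetArc v3 x ∧ GadgetArc x v1 → x = A31) _ ⟨p, q⟩
  have f13 : σ B13 = B13 := by
    obtain ⟨p, q⟩ := step v1 v3 B13 h1 h3 (by decide) (by decide)
    exact (by decide : ∀ x, GadgetArc v1 x ∧ GadgetArc x v3 → x = B13) _ ⟨p, q⟩
  have f32 : σ B32 = B32 := by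
    obtain ⟨p, q⟩ := step v3 v2 B32 h3 h2 (by decide) (by decide)
    exact (by decide : ∀ x, GadgetArc v3 x ∧ GadgetArc x v2 → x = B32) _ ⟨p, q⟩
  have f21 : σ B21 = B21 := by
    obtain ⟨p, q⟩ := step v2 v1 B21 h2 h1 (by decide) (by decide)
    exact (by decide : ∀ x, GadgetArc v2 x ∧ GadgetArc x v1 → x = B21) _ ⟨p, q⟩
  have eA : σ A = A := by
    have k1 := (hσ A A12).mp (by decide); rw [e12] at k1
    have k2 := (hσ A A23).mp (by decide); rw [e23] at k2
    have k3 := (hσ A A31).mp (by decide); rw [e31] at k3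
    exact (by decide : ∀ x, GadgetArc x A12 ∧ GadgetArc x A23 ∧ GadgetArc x A31 → x = A)
      _ ⟨k1, k2, k3⟩
  have eB : σ B = B := by
    have k1 := (hσ B B21).mp (by decide); rw [f21] at k1
    have k2 := (hσ B B32).mp (by decide); rw [f32] at k2
    have k3 := (hσ B B13).mp (by decide); rw [f13] at k3
    exact (by decide : ∀ x, GadgetArc x B21 ∧ GadgetArc x B32 ∧ GadgetArc x B13 → x = B)
      _ ⟨k1, k2, k3⟩
  apply Equiv.ext
  intro x
  cases x
  exacts [h1, h2, h3, e12, e23, e31, f21, f32, f13, eA, eB]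

/-- the rotation `(1 2 3)` -/
def gadgetRho : Equiv.Perm GadgetV where
  toFun := fun x => match x with
    | v1 => v2 | v2 => v3 | v3 => v1
    | A12 => A23 | A23 => A31 | A31 => A12
    | B13 => B21 | B21 => B32 | B32 => B13
    | A => A | B => B
  invFun := fun x => match x with
    | v1 => v3 | v2 => v1 | v3 => v2
    | A12 => A31 | A23 => A12 | A31 => A23
    | B13 => B32 | B21 => B13 | B32 => B21
    | A => A | B => B
  left_inv := by decide
  right_inv := by decide

/-- the transposition `(1 2)` -/
def gadgetT12 : Equiv.Perm GadgetV where
  toFun := fun x => match x with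
    | v1 => v2 | v2 => v1 | v3 => v3
    | A12 => B21 | A23 => B13 | A31 => B32
    | B21 => A12 | B13 => A23 | B32 => A31
    | A => B | B => A
  invFun := fun x => match x with
    | v1 => v2 | v2 => v1 | v3 => v3
    | A12 => B21 | A23 => B13 | A31 => B32
    | B21 => A12 | B13 => A23 | B32 => A31
    | A => B | B => A
  left_inv := by decide
  right_inv := by decide

/-- the transposition `(1 3)` -/
def gadgetT13 : Equiv.Perm GadgetV where
  toFun := fun x => match x with
    | v1 => v3 | v2 => v2 | v3 => v1
    | A12 => B32 | A23 => B21 | A31 => B13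
    | B32 => A12 | B21 => A23 | B13 => A31
    | A => B | B => A
  invFun := fun x => match x with
    | v1 => v3 | v2 => v2 | v3 => v1
    | A12 => B32 | A23 => B21 | A31 => B13
    | B32 => A12 | B21 => A23 | B13 => A31
    | A => B | B => A
  left_inv := by decide
  right_inv := by decide

/-- the transposition `(2 3)` -/
def gadgetT23 : Equiv.Perm GadgetV where
  toFun := fun x => match x with
    | v1 => v1 | v2 => v3 | v3 => v2
    | A12 => B13 | A23 => B32 | A31 => B21
    | B13 => A12 | B32 => A23 | B21 => A31
    | A => B | B => A
  invFun := fun x => match x with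
    | v1 => v1 | v2 => v3 | v3 => v2
    | A12 => B13 | A23 => B32 | A31 => B21
    | B13 => A12 | B32 => A23 | B21 => A31
    | A => B | B => A
  left_inv := by decide
  right_inv := by decide

lemma gadgetRho_mem : gadgetRho ∈ gadgetAutGroup := by
  show IsGadgetAut gadgetRho; decide

lemma gadgetT12_mem : gadgetT12 ∈ gadgetAutGroup := by
  show IsGadgetAut gadgetT12; decide

lemma gadgetT13_mem : gadgetT13 ∈ gadgetAutGroup := by
  show IsGadgetAut gadgetT13; decide

lemma gadgetT23_mem : gadgetT23 ∈ gadgetAutGroup := by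
  show IsGadgetAut gadgetT23; decide

lemma gadget_part1 : ∀ σ ∈ gadgetAutGroup, ∀ i : Fin 3, ∃ j : Fin 3, σ (gadgetT i) = gadgetT j := by
  intro σ hσ i
  have key : ∀ a y z : GadgetV, y ≠ z → GadgetArc a y → ¬GadgetArc y a →
      GadgetArc a z → ¬GadgetArc z a → ∃ j : Fin 3, σ a = gadgetT j := by
    intro a y z hyz hay hya haz hza
    have h1 : GadgetArc (σ a) (σ y) := (hσ a y).mp hay
    have h2 : ¬GadgetArc (σ y) (σ a) := fun h => hya ((hσ y a).mpr h)
    have h3 : GadgetArc (σ a) (σ z) := (hσ a z).mp haz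
    have h4 : ¬GadgetArc (σ z) (σ a) := fun h => hza ((hσ z a).mpr h)
    rcases gadget_tri (σ a) (σ y) (σ z) ⟨fun h => hyz (σ.injective h), h1, h2, h3, h4⟩ with
      h | h | h
    · exact ⟨0, h⟩
    · exact ⟨1, h⟩
    · exact ⟨2, h⟩
  fin_cases i
  · exact key v1 A12 B13 (by decide) (by decide) (by decide) (by decide) (by decide)
  · exact key v2 A23 B21 (by decide) (by decide) (by decide) (by decide) (by decide)
  · exact key v3 A31 B32 (by decide) (by decide) (by decide) (by decide) (by decide)

lemma gadget_part2 : ∀ σ ∈ gadgetAutGroup, ∀ τ ∈ gadgetAutGroup,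
    (∀ i : Fin 3, σ (gadgetT i) = τ (gadgetT i)) → σ = τ := by
  intro σ hσ τ hτ h
  have hmem : τ⁻¹ * σ ∈ gadgetAutGroup := mul_mem (inv_mem hτ) hσ
  have hfix : ∀ i : Fin 3, (τ⁻¹ * σ) (gadgetT i) = gadgetT i := by
    intro i
    show τ⁻¹ (σ (gadgetT i)) = gadgetT i
    rw [h i]; exact τ.symm_apply_apply _
  have := gadget_fix_id (τ⁻¹ * σ) (aut_of_mem hmem)
    (hfix 0) (hfix 1) (hfix 2)
  exact (inv_mul_eq_one.mp this).symm

lemma gadget_part3 : ∀ π : Equiv.Perm (Fin 3), ∃ σ ∈ gadgetAutGroup,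
    ∀ i : Fin 3, σ (gadgetT i) = gadgetT (π i) := by
  have realize : ∀ σ ∈ gadgetAutGroup, ∀ π : Equiv.Perm (Fin 3),
      σ v1 = gadgetT (π 0) → σ v2 = gadgetT (π 1) → σ v3 = gadgetT (π 2) →
      ∃ σ' ∈ gadgetAutGroup, ∀ i : Fin 3, σ' (gadgetT i) = gadgetT (π i) := by
    intro σ hσ π h0 h1 h2
    refine ⟨σ, hσ, fun i => ?_⟩
    fin_cases i
    · exact h0
    · exact h1
    · exact h2
  intro π
  obtain ⟨a, ha⟩ : ∃ a, π 0 = a := ⟨_, rfl⟩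
  obtain ⟨b, hb⟩ : ∃ b, π 1 = b := ⟨_, rfl⟩
  obtain ⟨c, hc⟩ : ∃ c, π 2 = c := ⟨_, rfl⟩
  have hab : a ≠ b := fun h => by
    have := π.injective (ha.trans (h.trans hb.symm)); exact absurd this (by decide)
  have hac : a ≠ c := fun h => by
    have := π.injective (ha.trans (h.trans hc.symm)); exact absurd this (by decide)
  have hbc : b ≠ c := fun h => by
    have := π.injective (hb.trans (h.trans hc.symm)); exact absurd this (by decide)
  fin_cases a <;> fin_cases b <;> fin_cases c <;>
    first
      | exact absurd rfl hab
      | exact absurd rfl hac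
      | exact absurd rfl hbc
      | (exact realize 1 (one_mem _) π
          (by rw [ha]; decide) (by rw [hb]; decide) (by rw [hc]; decide))
      | (exact realize gadgetRho gadgetRho_mem π
          (by rw [ha]; decide) (by rw [hb]; decide) (by rw [hc]; decide))
      | (exact realize (gadgetRho * gadgetRho) (mul_mem gadgetRho_mem gadgetRho_mem) π
          (by rw [ha]; decide) (by rw [hb]; decide) (by rw [hc]; decide))
      | (exact realize gadgetT12 gadgetT12_mem π
          (by rw [ha]; decide) (by rw [hb]; decide) (by rw [hc]; decide))
      | (exact realize gadgetT13 gadgetT13_mem π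
          (by rw [ha]; decide) (by rw [hb]; decide) (by rw [hc]; decide))
      | (exact realize gadgetT23 gadgetT23_mem π
          (by rw [ha]; decide) (by rw [hb]; decide) (by rw [hc]; decide))


lemma gadget_iso : Nonempty ((gadgetAutGroup : Subgroup (Equiv.Perm GadgetV)) ≃* Equiv.Perm (Fin 3)) := by
  have hg : ∀ (σ : gadgetAutGroup) (i : Fin 3),
      ∃ j, (σ : Equiv.Perm GadgetV) (gadgetT i) = gadgetT j :=
    fun σ i => gadget_part1 σ σ.2 i
  choose g hgspec using hg
  have ginj : ∀ σ, Function.Injective (g σ) := by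
    intro σ i j h
    apply gadgetT_inj
    apply (σ : Equiv.Perm GadgetV).injective
    rw [hgspec σ i, hgspec σ j, h]
  have gbij : ∀ σ, Function.Bijective (g σ) :=
    fun σ => Finite.injective_iff_bijective.mp (ginj σ)
  have hmul : ∀ σ τ : gadgetAutGroup,
      Equiv.ofBijective (g (σ * τ)) (gbij (σ * τ)) =
        Equiv.ofBijective (g σ) (gbij σ) * Equiv.ofBijective (g τ) (gbij τ) := by
    intro σ τ
    apply Equiv.ext
    intro i
    show g (σ * τ) i = g σ (g τ i)
    apply gadgetT_inj
    rw [← hgspec (σ * τ) i, ← hgspec σ (g τ i), ← hgspec τ i]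
    rfl
  let Φ : gadgetAutGroup →* Equiv.Perm (Fin 3) :=
    MonoidHom.mk' (fun σ => Equiv.ofBijective (g σ) (gbij σ)) hmul
  have Φinj : Function.Injective Φ := by
    intro σ τ h
    have hval : ∀ i, g σ i = g τ i := fun i => congrFun (congrArg (fun e : Equiv.Perm (Fin 3) => (e : Fin 3 → Fin 3)) h) i
    apply Subtype.ext
    apply gadget_part2 _ σ.2 _ τ.2
    intro i
    rw [hgspec σ i, hgspec τ i, hval i]
  have Φsurj : Function.Surjective Φ := by
    intro π
    obtain ⟨σ, hσ, hspec⟩ := gadget_part3 π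
    refine ⟨⟨σ, hσ⟩, ?_⟩
    apply Equiv.ext
    intro i
    show g ⟨σ, hσ⟩ i = π i
    apply gadgetT_inj
    rw [← hgspec ⟨σ, hσ⟩ i]
    exact hspec i
  exact ⟨MulEquiv.ofBijective Φ ⟨Φinj, Φsurj⟩⟩

/-- Every automorphism of the color gadget `Γ` maps the vertex set
`{1,2,3}` to itself; the restriction map from `Aut(Γ)` to the permutations of `{1,2,3}`
is injective and surjective; hence `Aut(Γ)` is isomorphic to `S₃` (acting naturally on
`{1,2,3}`). -/
theorem stmt_13 :
    (∀ σ ∈ gadgetAutGroup, ∀ i : Fin 3, ∃ j : Fin 3, σ (gadgetT i) = gadgetT j) ∧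
    (∀ σ ∈ gadgetAutGroup, ∀ τ ∈ gadgetAutGroup,
      (∀ i : Fin 3, σ (gadgetT i) = τ (gadgetT i)) → σ = τ) ∧
    (∀ π : Equiv.Perm (Fin 3), ∃ σ ∈ gadgetAutGroup,
      ∀ i : Fin 3, σ (gadgetT i) = gadgetT (π i)) ∧
    Nonempty (gadgetAutGroup ≃* Equiv.Perm (Fin 3)) := by
  exact ⟨gadget_part1, gadget_part2, gadget_part3, gadget_iso⟩
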